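/- arXiv:2504.02785 — 2 statements merged into one kernel-verified Lean document; each statement's English description precedes it below -/
import Mathlib

section
/- Nonnegativity and monotonicity of permutation traces of PSD powers: for any matrix σ with 0 ≼ σ ≼ I and any permutation π ∈ S_k, the quantity tr(P(π) · (σ^{a_1} ⊗ ⋯ ⊗ σ^{a_k})) is real and nonnegative for all real exponents a_i ≥ 0, and it is monotone decreasing in each exponent: if a_i ≥ b_i ≥ 0 for all i, then tr(P(π)·(σ^{a_1}⊗⋯⊗σ^{a_k})) ≤ tr(P(π)·(σ^{b_1}⊗⋯⊗σ^{b_k})). -/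
open scoped ComplexOrder
open Complex Finset Matrix

/-- The representation of `S_k` on `(ℂ^d)^{⊗k}` permuting tensor factors. -/
noncomputable def permMatrix (d k : ℕ) (π : Equiv.Perm (Fin k)) :
    Matrix (Fin k → Fin d) (Fin k → Fin d) ℂ :=
  Matrix.of fun f g => if ∀ a, f a = g (π⁻¹ a) then 1 else 0

/-- The tensor product `M₁ ⊗ ⋯ ⊗ M_k` of `d×d` matrices, as a matrix on `(ℂ^d)^{⊗k}`. -/
noncomputable def tensorPow {d k : ℕ} (M : Fin k → Matrix (Fin d) (Fin d) ℂ) :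
    Matrix (Fin k → Fin d) (Fin k → Fin d) ℂ :=
  Matrix.of fun f g => ∏ a, M a (f a) (g a)

/-- The real power `σ^a` of a Hermitian matrix, defined through its spectral decomposition. -/
noncomputable def hermPow {d : ℕ} {σ : Matrix (Fin d) (Fin d) ℂ} (hσ : σ.IsHermitian)
    (a : ℝ) : Matrix (Fin d) (Fin d) ℂ :=
  (hσ.eigenvectorUnitary : Matrix (Fin d) (Fin d) ℂ) *
    Matrix.diagonal (fun i => ((hσ.eigenvalues i ^ a : ℝ) : ℂ)) *
    star (hσ.eigenvectorUnitary : Matrix (Fin d) (Fin d) ℂ)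

lemma trace_formula {d k : ℕ} {σ : Matrix (Fin d) (Fin d) ℂ} (hσ : σ.IsHermitian)
    (π : Equiv.Perm (Fin k)) (a : Fin k → ℝ) :
    (permMatrix d k π * tensorPow fun i => hermPow hσ (a i)).trace =
      ((∑ J : Fin k → Fin d, if ∀ i, J i = J (π⁻¹ i) then
          ∏ i, (hσ.eigenvalues (J i)) ^ (a i) else 0 : ℝ) : ℂ) := by
  classical
  set U : Matrix (Fin d) (Fin d) ℂ := (hσ.eigenvectorUnitary : Matrix (Fin d) (Fin d) ℂ) with hUdef
  have hU : star U * U = 1 := Unitary.coe_star_mul_self hσ.eigenvectorUnitary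
  have horth : ∀ p q : Fin d, ∑ x, U x p * (starRingEnd ℂ) (U x q)
      = if q = p then 1 else 0 := by
    intro p q
    have h1 : (star U * U) q p = (1 : Matrix (Fin d) (Fin d) ℂ) q p := by rw [hU]
    rw [Matrix.mul_apply, Matrix.one_apply] at h1
    rw [← h1]
    exact Finset.sum_congr rfl fun x _ => by
      rw [Matrix.star_apply, RCLike.star_def, mul_comm]
  have hentry : ∀ (c : ℝ) (x y : Fin d), hermPow hσ c x y
      = ∑ j, U x j * ((hσ.eigenvalues j ^ c : ℝ) : ℂ) * (starRingEnd ℂ) (U y j) := by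
    intro c x y
    rw [hermPow, Matrix.mul_apply]
    exact Finset.sum_congr rfl fun j _ => by
      rw [Matrix.mul_diagonal, Matrix.star_apply, RCLike.star_def]
  -- step 1: collapse the g-sum
  have step1 : (permMatrix d k π * tensorPow fun i => hermPow hσ (a i)).trace
      = ∑ f : Fin k → Fin d, ∏ i, hermPow hσ (a i) (f (π i)) (f i) := by
    rw [Matrix.trace]
    refine Finset.sum_congr rfl fun f _ => ?_
    rw [Matrix.diag_apply, Matrix.mul_apply]
    have hcond : ∀ g : Fin k → Fin d, (∀ i, f i = g (π⁻¹ i)) ↔ g = fun i => f (π i) := by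
      intro g
      constructor
      · intro h; funext j
        have := h (π j); simpa using this.symm
      · rintro rfl i; simp
    calc ∑ g, permMatrix d k π f g * tensorPow (fun i => hermPow hσ (a i)) g f
        = ∑ g, if g = (fun i => f (π i)) then
            tensorPow (fun i => hermPow hσ (a i)) g f else 0 := by
          refine Finset.sum_congr rfl fun g _ => ?_
          rw [permMatrix]
          simp only [Matrix.of_apply, ite_mul, one_mul, zero_mul]
          exact if_congr (hcond g) rfl rfl
      _ = tensorPow (fun i => hermPow hσ (a i)) (fun i => f (π i)) f :=
          (Finset.sum_ite_eq' _ _ _).trans (if_pos (Finset.mem_univ _))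
      _ = ∏ i, hermPow hσ (a i) (f (π i)) (f i) := rfl
  rw [step1]
  -- step 2: expand entries and exchange
  have step2 : ∀ f : Fin k → Fin d,
      ∏ i, hermPow hσ (a i) (f (π i)) (f i)
      = ∑ J : Fin k → Fin d, (∏ i, ((hσ.eigenvalues (J i) ^ a i : ℝ) : ℂ)) *
          ∏ i, (U (f i) (J (π⁻¹ i)) * (starRingEnd ℂ) (U (f i) (J i))) := by
    intro f
    calc ∏ i, hermPow hσ (a i) (f (π i)) (f i)
        = ∏ i, ∑ j, U (f (π i)) j * ((hσ.eigenvalues j ^ a i : ℝ) : ℂ)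
            * (starRingEnd ℂ) (U (f i) j) := by
          exact Finset.prod_congr rfl fun i _ => hentry (a i) _ _
      _ = ∑ J ∈ Fintype.piFinset (fun _ : Fin k => (Finset.univ : Finset (Fin d))),
            ∏ i, (U (f (π i)) (J i) * ((hσ.eigenvalues (J i) ^ a i : ℝ) : ℂ)
              * (starRingEnd ℂ) (U (f i) (J i))) := Finset.prod_univ_sum _ _
      _ = ∑ J : Fin k → Fin d, (∏ i, ((hσ.eigenvalues (J i) ^ a i : ℝ) : ℂ)) *
            ∏ i, (U (f (π i)) (J i) * (starRingEnd ℂ) (U (f i) (J i))) := by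
          rw [Fintype.piFinset_univ]
          refine Finset.sum_congr rfl fun J _ => ?_
          rw [← Finset.prod_mul_distrib]
          exact Finset.prod_congr rfl fun i _ => by ring
      _ = ∑ J : Fin k → Fin d, (∏ i, ((hσ.eigenvalues (J i) ^ a i : ℝ) : ℂ)) *
            ∏ i, (U (f i) (J (π⁻¹ i)) * (starRingEnd ℂ) (U (f i) (J i))) := by
          refine Finset.sum_congr rfl fun J _ => ?_
          congr 1
          calc ∏ i, (U (f (π i)) (J i) * (starRingEnd ℂ) (U (f i) (J i)))
              = (∏ i, U (f (π i)) (J i)) * ∏ i, (starRingEnd ℂ) (U (f i) (J i)) :=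
                Finset.prod_mul_distrib
            _ = (∏ i, U (f i) (J (π⁻¹ i))) * ∏ i, (starRingEnd ℂ) (U (f i) (J i)) := by
                congr 1
                calc ∏ i, U (f (π i)) (J i)
                    = ∏ i, U (f (π i)) (J (π⁻¹ (π i))) := by
                      exact Finset.prod_congr rfl fun i _ => by rw [Equiv.Perm.inv_def, Equiv.symm_apply_apply]
                  _ = ∏ i, U (f i) (J (π⁻¹ i)) :=
                      Equiv.prod_comp π (fun i => U (f i) (J (π⁻¹ i)))
            _ = ∏ i, (U (f i) (J (π⁻¹ i)) * (starRingEnd ℂ) (U (f i) (J i))) :=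
                Finset.prod_mul_distrib.symm
  calc ∑ f : Fin k → Fin d, ∏ i, hermPow hσ (a i) (f (π i)) (f i)
      = ∑ f : Fin k → Fin d, ∑ J : Fin k → Fin d,
          (∏ i, ((hσ.eigenvalues (J i) ^ a i : ℝ) : ℂ)) *
          ∏ i, (U (f i) (J (π⁻¹ i)) * (starRingEnd ℂ) (U (f i) (J i))) :=
        Finset.sum_congr rfl fun f _ => step2 f
    _ = ∑ J : Fin k → Fin d, (∏ i, ((hσ.eigenvalues (J i) ^ a i : ℝ) : ℂ)) *
          ∑ f : Fin k → Fin d, ∏ i, (U (f i) (J (π⁻¹ i)) * (starRingEnd ℂ) (U (f i) (J i))) := by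
        rw [Finset.sum_comm]
        exact Finset.sum_congr rfl fun J _ => (Finset.mul_sum _ _ _).symm
    _ = ∑ J : Fin k → Fin d, (∏ i, ((hσ.eigenvalues (J i) ^ a i : ℝ) : ℂ)) *
          (if ∀ i, J i = J (π⁻¹ i) then 1 else 0) := by
        refine Finset.sum_congr rfl fun J _ => ?_
        congr 1
        calc ∑ f : Fin k → Fin d, ∏ i, (U (f i) (J (π⁻¹ i)) * (starRingEnd ℂ) (U (f i) (J i)))
            = ∏ i, ∑ x : Fin d, (U x (J (π⁻¹ i)) * (starRingEnd ℂ) (U x (J i))) := by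
              rw [Finset.prod_univ_sum, Fintype.piFinset_univ]
          _ = ∏ i, (if J i = J (π⁻¹ i) then (1:ℂ) else 0) :=
              Finset.prod_congr rfl fun i _ => horth _ _
          _ = if ∀ i, J i = J (π⁻¹ i) then (1:ℂ) else 0 := by
              simp [Finset.prod_boole]
    _ = ((∑ J : Fin k → Fin d, if ∀ i, J i = J (π⁻¹ i) then
          ∏ i, (hσ.eigenvalues (J i)) ^ (a i) else 0 : ℝ) : ℂ) := by
        push_cast [apply_ite]
        exact Finset.sum_congr rfl fun J _ => by split <;> simp

lemma eig_le_one {d : ℕ} {σ : Matrix (Fin d) (Fin d) ℂ} (hσ : σ.PosSemidef)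
    (hσI : ((1 : Matrix (Fin d) (Fin d) ℂ) - σ).PosSemidef) (i : Fin d) :
    hσ.1.eigenvalues i ≤ 1 := by
  classical
  set v : Fin d → ℂ := ⇑(hσ.1.eigenvectorBasis i) with hv
  have hnorm : dotProduct (star v) v = 1 := by
    have hU : star (hσ.1.eigenvectorUnitary : Matrix (Fin d) (Fin d) ℂ) *
        (hσ.1.eigenvectorUnitary : Matrix (Fin d) (Fin d) ℂ) = 1 :=
      Unitary.coe_star_mul_self hσ.1.eigenvectorUnitary
    have h1 : (star (hσ.1.eigenvectorUnitary : Matrix (Fin d) (Fin d) ℂ) *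
        (hσ.1.eigenvectorUnitary : Matrix (Fin d) (Fin d) ℂ)) i i = 1 := by
      rw [hU, Matrix.one_apply_eq]
    rw [Matrix.mul_apply] at h1
    rw [← h1, dotProduct]
    exact Finset.sum_congr rfl fun x _ => by
      rw [Matrix.star_apply, Matrix.IsHermitian.eigenvectorUnitary_apply, Pi.star_apply]
  have hmv : σ *ᵥ v = (hσ.1.eigenvalues i : ℂ) • v := by
    have := hσ.1.mulVec_eigenvectorBasis i
    rw [← hv] at this
    rw [this]
    ext x
    simp [Complex.real_smul]
  have h := hσI.re_dotProduct_nonneg v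
  rw [Matrix.sub_mulVec, Matrix.one_mulVec, dotProduct_sub, hmv,
    dotProduct_smul, hnorm, smul_eq_mul, mul_one, map_sub] at h
  simp only [RCLike.re_to_complex, Complex.one_re, Complex.ofReal_re] at h
  linarith

/-- For `0 ≼ σ ≼ I` and any permutation `π ∈ S_k`, the quantity
`tr(P(π)·(σ^{a₁} ⊗ ⋯ ⊗ σ^{a_k}))` is real and nonnegative for all real exponents `aᵢ ≥ 0`,
and it is monotone decreasing in each exponent. -/
theorem stmt13 (d k : ℕ) (σ : Matrix (Fin d) (Fin d) ℂ)
    (hσ : σ.PosSemidef) (hσI : ((1 : Matrix (Fin d) (Fin d) ℂ) - σ).PosSemidef)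
    (π : Equiv.Perm (Fin k)) :
    (∀ a : Fin k → ℝ, (∀ i, 0 ≤ a i) →
        ((permMatrix d k π * tensorPow fun i => hermPow hσ.1 (a i)).trace).im = 0 ∧
        0 ≤ ((permMatrix d k π * tensorPow fun i => hermPow hσ.1 (a i)).trace).re) ∧
      (∀ a b : Fin k → ℝ, (∀ i, 0 ≤ b i) → (∀ i, b i ≤ a i) →
        ((permMatrix d k π * tensorPow fun i => hermPow hσ.1 (a i)).trace).re ≤
          ((permMatrix d k π * tensorPow fun i => hermPow hσ.1 (b i)).trace).re) := by
  have hge : ∀ i, 0 ≤ hσ.1.eigenvalues i := hσ.eigenvalues_nonneg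
  have hle : ∀ i, hσ.1.eigenvalues i ≤ 1 := eig_le_one hσ hσI
  have key : ∀ lam : ℝ, 0 ≤ lam → lam ≤ 1 → ∀ x y : ℝ, 0 ≤ y → y ≤ x →
      lam ^ x ≤ lam ^ y := by
    intro lam h0 h1 x y hy hxy
    rcases eq_or_lt_of_le h0 with h | h
    · rw [← h]
      rcases eq_or_lt_of_le hy with hy0 | hy0
      · rw [← hy0, Real.rpow_zero]
        exact Real.rpow_le_one le_rfl zero_le_one (hy.trans hxy)
      · rw [Real.zero_rpow hy0.ne', Real.zero_rpow (hy0.trans_le hxy).ne']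
    · exact Real.rpow_le_rpow_of_exponent_ge h h1 hxy
  constructor
  · intro a ha
    rw [trace_formula]
    refine ⟨Complex.ofReal_im _, ?_⟩
    rw [Complex.ofReal_re]
    refine Finset.sum_nonneg fun J _ => ?_
    split
    · exact Finset.prod_nonneg fun i _ => Real.rpow_nonneg (hge _) _
    · exact le_rfl
  · intro a b hb hba
    rw [trace_formula, trace_formula, Complex.ofReal_re, Complex.ofReal_re]
    refine Finset.sum_le_sum fun J _ => ?_
    split
    · refine Finset.prod_le_prod (fun i _ => Real.rpow_nonneg (hge _) _)
        (fun i _ => key _ (hge _) (hle _) _ _ (hb i) (hba i))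
    · exact le_rfl
end

section
/- Trace-distance PCA error upper bounds fidelity PCA error: let ρ be a d×d density matrix with sorted eigenvalues α_1 ≥ ⋯ ≥ α_d and σ a rank-r PSD matrix with tr(σ) ≤ 1. Then Σ_{i=1}^r α_i + tr(σ) − 2·F(ρ, σ) ≤ ‖ρ − σ‖_1 − Σ_{i=r+1}^d α_i, where ‖·‖_1 is the trace norm and F is the (square-root) fidelity extended to PSD matrices. -/
open scoped ComplexOrder

/-- The eigenvalues of a Hermitian matrix, sorted in descending order. -/
noncomputable def descEigs {d : ℕ} {A : Matrix (Fin d) (Fin d) ℂ}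
    (hA : A.IsHermitian) : Fin d → ℝ :=
  fun i => (hA.eigenvalues ∘ Tuple.sort hA.eigenvalues) i.rev

/-- The positive semidefinite square root of a matrix (junk value `0` off the PSD cone). -/
noncomputable def msqrt {d : ℕ} (A : Matrix (Fin d) (Fin d) ℂ) :
    Matrix (Fin d) (Fin d) ℂ :=
  letI := Classical.propDecidable A.PosSemidef
  if h : A.PosSemidef then
    (h.1.eigenvectorUnitary : Matrix (Fin d) (Fin d) ℂ) *
      Matrix.diagonal (((↑) : ℝ → ℂ) ∘ Real.sqrt ∘ h.1.eigenvalues) *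
      (star h.1.eigenvectorUnitary : Matrix (Fin d) (Fin d) ℂ)
  else 0

/-- The (square-root) fidelity `F(ρ,σ) = tr √(√σ ρ √σ)`, extended to PSD matrices. -/
noncomputable def fid {d : ℕ} (ρ σ : Matrix (Fin d) (Fin d) ℂ) : ℝ :=
  ((msqrt (msqrt σ * ρ * msqrt σ)).trace).re

open Matrix

variable {d : ℕ}

noncomputable def Matrix.PosSemidef.sqrt {A : Matrix (Fin d) (Fin d) ℂ} (h : A.PosSemidef) :
    Matrix (Fin d) (Fin d) ℂ :=
  (h.1.eigenvectorUnitary : Matrix (Fin d) (Fin d) ℂ) *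
    Matrix.diagonal (((↑) : ℝ → ℂ) ∘ Real.sqrt ∘ h.1.eigenvalues) *
    (star h.1.eigenvectorUnitary : Matrix (Fin d) (Fin d) ℂ)

theorem Matrix.PosSemidef.posSemidef_sqrt {A : Matrix (Fin d) (Fin d) ℂ} (h : A.PosSemidef) :
    h.sqrt.PosSemidef := by
  have hd : (Matrix.diagonal (((↑) : ℝ → ℂ) ∘ Real.sqrt ∘ h.1.eigenvalues)).PosSemidef :=
    Matrix.PosSemidef.diagonal fun i => Complex.zero_le_real.2 (Real.sqrt_nonneg _)
  have := hd.mul_mul_conjTranspose_same (h.1.eigenvectorUnitary : Matrix (Fin d) (Fin d) ℂ)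
  rwa [← Matrix.star_eq_conjTranspose] at this

theorem Matrix.PosSemidef.sqrt_mul_self {A : Matrix (Fin d) (Fin d) ℂ} (h : A.PosSemidef) :
    h.sqrt * h.sqrt = A := by
  have hU : (star h.1.eigenvectorUnitary : Matrix (Fin d) (Fin d) ℂ) *
      (h.1.eigenvectorUnitary : Matrix (Fin d) (Fin d) ℂ) = 1 := Unitary.coe_star_mul_self _
  conv_rhs => rw [h.1.spectral_theorem, Unitary.conjStarAlgAut_apply]
  unfold Matrix.PosSemidef.sqrt
  have e : ∀ (U D E V : Matrix (Fin d) (Fin d) ℂ),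
      U * D * V * (U * E * V) = U * (D * (V * U) * E) * V := by
    intros; noncomm_ring
  rw [e, hU, Matrix.mul_one, Matrix.diagonal_mul_diagonal]
  congr 1
  congr 1
  congr 1
  funext i
  simp only [Function.comp_apply]
  rw [← Complex.ofReal_mul, Real.mul_self_sqrt (h.eigenvalues_nonneg i)]
  rfl

lemma trace_eq_sum_eigs {A : Matrix (Fin d) (Fin d) ℂ} (hA : A.IsHermitian) :
    A.trace = ∑ i, (hA.eigenvalues i : ℂ) := by
  conv_lhs => rw [hA.spectral_theorem, Unitary.conjStarAlgAut_apply]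
  rw [Matrix.trace_mul_cycle]
  rw [Unitary.coe_star_mul_self, Matrix.one_mul, Matrix.trace_diagonal]
  rfl

lemma trace_re_eq_sum_eigs {A : Matrix (Fin d) (Fin d) ℂ} (hA : A.IsHermitian) :
    (A.trace).re = ∑ i, hA.eigenvalues i := by
  rw [trace_eq_sum_eigs hA]
  simp

lemma psd_trace_re_nonneg {A : Matrix (Fin d) (Fin d) ℂ} (hA : A.PosSemidef) :
    0 ≤ (A.trace).re := by
  rw [trace_re_eq_sum_eigs hA.1]
  exact Finset.sum_nonneg fun i _ => hA.eigenvalues_nonneg i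

lemma conj_mul_self_re (z : ℂ) : (star z * z).re = ‖z‖ ^ 2 := by
  rw [Complex.star_def, mul_comm, Complex.mul_conj, Complex.normSq_eq_norm_sq, Complex.ofReal_re]

lemma sum_mul_le_sqrt_mul_sqrt (f g : Fin d → ℝ) (hf : ∀ i, 0 ≤ f i) (hg : ∀ i, 0 ≤ g i) :
    ∑ i, f i * g i ≤ Real.sqrt (∑ i, f i ^ 2) * Real.sqrt (∑ i, g i ^ 2) := by
  have h := Finset.sum_mul_sq_le_sq_mul_sq Finset.univ f g
  have h1 : 0 ≤ ∑ i, f i * g i := Finset.sum_nonneg fun i _ => mul_nonneg (hf i) (hg i)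
  have h2 : 0 ≤ ∑ i, f i ^ 2 := Finset.sum_nonneg fun i _ => sq_nonneg _
  have h3 : 0 ≤ ∑ i, g i ^ 2 := Finset.sum_nonneg fun i _ => sq_nonneg _
  calc ∑ i, f i * g i = Real.sqrt ((∑ i, f i * g i)^2) := (Real.sqrt_sq h1).symm
    _ ≤ Real.sqrt ((∑ i, f i ^ 2) * ∑ i, g i ^ 2) := Real.sqrt_le_sqrt h
    _ = _ := Real.sqrt_mul h2 _


lemma psd_mul_trace_re_nonneg {A B : Matrix (Fin d) (Fin d) ℂ}
    (hA : A.PosSemidef) (hB : B.PosSemidef) : 0 ≤ ((A * B).trace).re := by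
  have h1 : A * B = hA.sqrt * hA.sqrt * B := by rw [hA.sqrt_mul_self]
  have h2 : (hA.sqrt * B * hA.sqrt).trace = (A * B).trace := by
    rw [Matrix.trace_mul_cycle, ← h1]
  rw [← h2]
  have h3 : (hA.sqrt * B * hA.sqrt).PosSemidef := by
    have := hB.mul_mul_conjTranspose_same hA.sqrt
    rwa [hA.posSemidef_sqrt.1.eq] at this
  exact psd_trace_re_nonneg h3

lemma unitary_entry_norm_le {U : Matrix (Fin d) (Fin d) ℂ}
    (hU : U ∈ Matrix.unitaryGroup (Fin d) ℂ) (i j : Fin d) : ‖U i j‖ ≤ 1 := by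
  have h := Matrix.mem_unitaryGroup_iff'.mp hU
  have h1 : (star U * U) j j = 1 := by rw [h]; simp
  rw [Matrix.mul_apply] at h1
  have h2 : ∀ k, star U j k * U k j = ((‖U k j‖^2 : ℝ) : ℂ) := by
    intro k
    rw [Matrix.star_apply, Complex.star_def, mul_comm, Complex.mul_conj, Complex.normSq_eq_norm_sq]
  rw [Finset.sum_congr rfl (fun k _ => h2 k)] at h1
  have h3 : ∑ k, (‖U k j‖:ℝ)^2 = 1 := by
    have := congrArg Complex.re h1
    simpa [Complex.re_sum, ← Complex.ofReal_pow] using this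
  have h4 : (‖U i j‖:ℝ)^2 ≤ 1 := by
    rw [← h3]
    exact Finset.single_le_sum (f := fun k => (‖U k j‖:ℝ)^2)
      (fun k _ => sq_nonneg _) (Finset.mem_univ i)
  nlinarith [norm_nonneg (U i j)]

lemma trace_mul_unitary_le {Δ W : Matrix (Fin d) (Fin d) ℂ} (hΔ : Δ.IsHermitian)
    (hW : W ∈ Matrix.unitaryGroup (Fin d) ℂ) :
    ((Δ * W).trace).re ≤ ∑ i, |hΔ.eigenvalues i| := by
  set U : Matrix (Fin d) (Fin d) ℂ := (hΔ.eigenvectorUnitary : Matrix (Fin d) (Fin d) ℂ) with hUdef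
  have hUmem : U ∈ Matrix.unitaryGroup (Fin d) ℂ := hΔ.eigenvectorUnitary.2
  have hX : (star U * (W * U)) ∈ Matrix.unitaryGroup (Fin d) ℂ :=
    mul_mem (Unitary.star_mem hUmem) (mul_mem hW hUmem)
  have h1 : (Δ * W).trace = (Matrix.diagonal (RCLike.ofReal ∘ hΔ.eigenvalues) *
      (star U * (W * U))).trace := by
    conv_lhs => rw [hΔ.spectral_theorem, Unitary.conjStarAlgAut_apply]
    simp only [Matrix.mul_assoc, ← hUdef]
    rw [Matrix.trace_mul_comm]
    simp only [Matrix.mul_assoc]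
  rw [h1, Matrix.trace, Complex.re_sum]
  apply Finset.sum_le_sum
  intro i _
  rw [Matrix.diag_apply, Matrix.mul_apply]
  rw [Finset.sum_eq_single i (fun b _ hb => by simp [Matrix.diagonal_apply_ne _ (Ne.symm hb)])
    (fun h => absurd (Finset.mem_univ i) h)]
  simp only [Matrix.diagonal_apply_eq, Function.comp_apply, RCLike.ofReal_alg]
  have hle : ‖(star U * (W * U)) i i‖ ≤ 1 := unitary_entry_norm_le hX i i
  have hre : ((hΔ.eigenvalues i : ℂ) * (star U * (W * U)) i i).re
      = hΔ.eigenvalues i * ((star U * (W * U)) i i).re := by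
    simp [Complex.mul_re]
  rw [show ((hΔ.eigenvalues i : ℝ) • (1:ℂ)) = ((hΔ.eigenvalues i : ℂ)) by simp]
  rw [hre]
  calc hΔ.eigenvalues i * ((star U * (W * U)) i i).re
      ≤ |hΔ.eigenvalues i * ((star U * (W * U)) i i).re| := le_abs_self _
    _ = |hΔ.eigenvalues i| * |((star U * (W * U)) i i).re| := abs_mul _ _
    _ ≤ |hΔ.eigenvalues i| * 1 := by
        apply mul_le_mul_of_nonneg_left _ (abs_nonneg _)
        exact le_trans (Complex.abs_re_le_norm _) hle
    _ = |hΔ.eigenvalues i| := mul_one _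

lemma sqrt_trace_re {A : Matrix (Fin d) (Fin d) ℂ} (hA : A.PosSemidef) :
    (hA.sqrt.trace).re = ∑ i, Real.sqrt (hA.1.eigenvalues i) := by
  have h : hA.sqrt.PosSemidef := hA.posSemidef_sqrt
  rw [Matrix.PosSemidef.sqrt, Matrix.trace_mul_cycle, Unitary.coe_star_mul_self,
    Matrix.one_mul, Matrix.trace_diagonal]
  simp [Complex.re_sum]

lemma re_trace_le_trace_sqrt (M : Matrix (Fin d) (Fin d) ℂ) :
    (M.trace).re ≤ (((Matrix.posSemidef_conjTranspose_mul_self M).sqrt).trace).re := by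
  set hN := Matrix.posSemidef_conjTranspose_mul_self M
  set V : Matrix (Fin d) (Fin d) ℂ := (hN.1.eigenvectorUnitary : Matrix (Fin d) (Fin d) ℂ)
    with hVdef
  have hVmem : V ∈ Matrix.unitaryGroup (Fin d) ℂ := hN.1.eigenvectorUnitary.2
  have hVsV : star V * V = 1 := Matrix.mem_unitaryGroup_iff'.mp hVmem
  have hVVs : V * star V = 1 := Matrix.mem_unitaryGroup_iff.mp hVmem
  -- columns of M*V have squared norm = eigenvalue
  have hdiag : star V * ((Mᴴ * M) * V) = Matrix.diagonal (RCLike.ofReal ∘ hN.1.eigenvalues) := by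
    rw [← Matrix.mul_assoc]
    have := hN.1.conjStarAlgAut_star_eigenvectorUnitary
    simpa only [Unitary.conjStarAlgAut_apply, Unitary.coe_star, star_star] using this
  have h1 : M.trace = (star V * (M * V)).trace := by
    rw [Matrix.trace_mul_comm, Matrix.mul_assoc, hVVs, Matrix.mul_one]
  rw [h1, sqrt_trace_re hN, Matrix.trace, Complex.re_sum]
  apply Finset.sum_le_sum
  intro i _
  rw [Matrix.diag_apply]
  have key : ‖(star V * (M * V)) i i‖ ≤ Real.sqrt (hN.1.eigenvalues i) := by
    rw [Matrix.mul_apply]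
    have e1 : ∑ j, ‖V j i‖^2 = 1 := by
      have h2 : (star V * V) i i = 1 := by rw [hVsV]; simp
      rw [Matrix.mul_apply] at h2
      have h3 := congrArg Complex.re h2
      rw [Complex.re_sum, Complex.one_re] at h3
      rw [← h3]
      apply Finset.sum_congr rfl
      intro j _
      rw [Matrix.star_apply]
      exact (conj_mul_self_re _).symm
    have e2 : ∑ j, ‖(M*V) j i‖^2 = hN.1.eigenvalues i := by
      have h2 : ((M*V)ᴴ * (M*V)) i i = ((hN.1.eigenvalues i : ℝ) : ℂ) := by
        rw [show (M*V)ᴴ * (M*V) = star V * (Mᴴ * M * V) from by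
          rw [Matrix.conjTranspose_mul]; noncomm_ring, hdiag]
        simp
      rw [Matrix.mul_apply] at h2
      have h3 := congrArg Complex.re h2
      rw [Complex.re_sum, Complex.ofReal_re] at h3
      rw [← h3]
      apply Finset.sum_congr rfl
      intro j _
      rw [Matrix.conjTranspose_apply]
      exact (conj_mul_self_re _).symm
    calc ‖∑ j, star V i j * (M * V) j i‖
        ≤ ∑ j, ‖star V i j * (M * V) j i‖ :=
          norm_sum_le _ _
      _ = ∑ j, ‖V j i‖ * ‖(M*V) j i‖ := by
          apply Finset.sum_congr rfl; intro j _
          rw [Matrix.star_apply, norm_mul]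
          simp
      _ ≤ Real.sqrt (∑ j, ‖V j i‖^2) * Real.sqrt (∑ j, ‖(M*V) j i‖^2) :=
          sum_mul_le_sqrt_mul_sqrt _ _ (fun j => norm_nonneg _)
            (fun j => norm_nonneg _)
      _ = Real.sqrt (hN.1.eigenvalues i) := by rw [e1, e2, Real.sqrt_one, one_mul]
  exact le_trans (Complex.re_le_norm _) key

lemma powers_stormer {A B : Matrix (Fin d) (Fin d) ℂ} (hA : A.PosSemidef) (hB : B.PosSemidef) :
    (A.trace).re + (B.trace).re - 2 * ((hA.sqrt * hB.sqrt).trace).re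
      ≤ ∑ i, |(hA.1.sub hB.1).eigenvalues i| := by
  set S := hA.sqrt with hSdef
  set T := hB.sqrt with hTdef
  have hS : S.PosSemidef := hA.posSemidef_sqrt
  have hT : T.PosSemidef := hB.posSemidef_sqrt
  have hH : (S - T).IsHermitian := hS.1.sub hT.1
  set μ := hH.eigenvalues with hμdef
  set V : Matrix (Fin d) (Fin d) ℂ := (hH.eigenvectorUnitary : Matrix (Fin d) (Fin d) ℂ)
    with hVdef
  have hVmem : V ∈ Matrix.unitaryGroup (Fin d) ℂ := hH.eigenvectorUnitary.2
  have hVsV : star V * V = 1 := Matrix.mem_unitaryGroup_iff'.mp hVmem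
  have hmul : ∀ (a b : Fin d → ℂ), (V * Matrix.diagonal a * star V) *
      (V * Matrix.diagonal b * star V) = V * Matrix.diagonal (a * b) * star V := by
    intro a b
    have e : (V * Matrix.diagonal a * star V) * (V * Matrix.diagonal b * star V)
        = V * (Matrix.diagonal a * ((star V * V) * (Matrix.diagonal b * star V))) := by
      noncomm_ring
    rw [e, hVsV, Matrix.one_mul]
    simp only [← Matrix.mul_assoc]
    rw [Matrix.mul_assoc V, Matrix.diagonal_mul_diagonal]
    rfl
  set s : Fin d → ℂ := fun i => if 0 ≤ μ i then 1 else -1 with hsdef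
  set pC : Fin d → ℂ := fun i => ((max (μ i) 0 : ℝ) : ℂ) with hpdef
  set nC : Fin d → ℂ := fun i => ((max (-μ i) 0 : ℝ) : ℂ) with hndef
  set W := V * Matrix.diagonal s * star V with hWdef
  set Hp := V * Matrix.diagonal pC * star V with hHpdef
  set Hm := V * Matrix.diagonal nC * star V with hHmdef
  have hdiagmem : Matrix.diagonal s ∈ Matrix.unitaryGroup (Fin d) ℂ := by
    rw [Matrix.mem_unitaryGroup_iff', Matrix.star_eq_conjTranspose,
      Matrix.diagonal_conjTranspose, Matrix.diagonal_mul_diagonal]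
    have e : (fun i => star s i * s i) = fun _ => (1 : ℂ) := by
      funext i
      by_cases h : 0 ≤ μ i <;> simp [hsdef, h]
    rw [e, Matrix.diagonal_one]
  have hWmem : W ∈ Matrix.unitaryGroup (Fin d) ℂ :=
    mul_mem (mul_mem hVmem hdiagmem) (Unitary.star_mem hVmem)
  have hHspec : S - T = V * Matrix.diagonal (RCLike.ofReal ∘ μ) * star V := by
    conv_lhs => rw [hH.spectral_theorem, Unitary.conjStarAlgAut_apply]
  have hHppsd : Hp.PosSemidef := by
    have hd : Matrix.PosSemidef (Matrix.diagonal pC) :=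
      Matrix.PosSemidef.diagonal fun i => Complex.zero_le_real.2 (le_max_right _ _)
    have := hd.mul_mul_conjTranspose_same V
    rwa [← Matrix.star_eq_conjTranspose] at this
  have hHmpsd : Hm.PosSemidef := by
    have hd : Matrix.PosSemidef (Matrix.diagonal nC) :=
      Matrix.PosSemidef.diagonal fun i => Complex.zero_le_real.2 (le_max_right _ _)
    have := hd.mul_mul_conjTranspose_same V
    rwa [← Matrix.star_eq_conjTranspose] at this
  have hdsub : Matrix.diagonal (RCLike.ofReal ∘ μ : Fin d → ℂ)
      = Matrix.diagonal pC - Matrix.diagonal nC := by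
    ext i j
    by_cases h : i = j
    · subst h
      simp only [Matrix.sub_apply, Matrix.diagonal_apply_eq, Function.comp_apply, hpdef, hndef]
      rw [← Complex.ofReal_sub, max_zero_sub_max_neg_zero_eq_self]
      norm_num
    · simp [Matrix.diagonal_apply_ne _ h]
  have hdiff : S - T = Hp - Hm := by
    rw [hHspec, hdsub, Matrix.mul_sub, Matrix.sub_mul]
  have habs : (RCLike.ofReal ∘ μ : Fin d → ℂ) * s = pC + nC := by
    funext i
    simp only [Pi.mul_apply, Pi.add_apply, Function.comp_apply, hsdef, hpdef, hndef]
    by_cases h : 0 ≤ μ i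
    · rw [if_pos h, max_eq_left h, max_eq_right (neg_nonpos.2 h)]
      simp
    · rw [if_neg h]
      push_neg at h
      rw [max_eq_right h.le, max_eq_left (neg_nonneg.2 h.le)]
      exact (by push_cast; ring : ((μ i : ℝ) : ℂ) * -1 = ((0:ℝ) : ℂ) + ((-μ i : ℝ) : ℂ))
  have habs' : s * (RCLike.ofReal ∘ μ : Fin d → ℂ) = pC + nC := by
    rw [mul_comm]; exact habs
  have hdadd : Matrix.diagonal (pC + nC) = Matrix.diagonal pC + Matrix.diagonal nC := by
    ext i j
    by_cases h : i = j
    · subst h; simp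
    · simp [Matrix.diagonal_apply_ne _ h]
  have hHW : (S - T) * W = Hp + Hm := by
    rw [hHspec, hWdef, hmul, habs, hdadd, Matrix.mul_add, Matrix.add_mul]
  have hWH : W * (S - T) = Hp + Hm := by
    rw [hHspec, hWdef, hmul, habs', hdadd, Matrix.mul_add, Matrix.add_mul]
  have hzero : pC * nC = 0 := by
    funext i
    simp only [Pi.mul_apply, Pi.zero_apply, hpdef, hndef]
    by_cases h : 0 ≤ μ i
    · rw [max_eq_right (neg_nonpos.2 h)]; simp
    · push_neg at h
      rw [max_eq_right h.le]; simp
  have hzero' : nC * pC = 0 := by rw [mul_comm]; exact hzero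
  have hdiag0 : Matrix.diagonal (0 : Fin d → ℂ) = 0 := by
    ext i j
    by_cases h : i = j
    · subst h; simp
    · simp [Matrix.diagonal_apply_ne _ h]
  have hpm : Hp * Hm = 0 := by
    rw [hHpdef, hHmdef, hmul, hzero, hdiag0, Matrix.mul_zero, Matrix.zero_mul]
  have hmp : Hm * Hp = 0 := by
    rw [hHmdef, hHpdef, hmul, hzero', hdiag0, Matrix.mul_zero, Matrix.zero_mul]
  set Δ := A - B with hΔdef
  have hΔST : Δ = S * S - T * T := by rw [hΔdef, ← hA.sqrt_mul_self, ← hB.sqrt_mul_self]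
  have hsum2 : Δ * W + Δ * W = ((S + T) * (S - T)) * W + ((S - T) * (S + T)) * W := by
    rw [hΔST]; noncomm_ring
  have c1 : (Δ * W).trace + (Δ * W).trace
      = ((S + T) * (Hp + Hm)).trace + ((S + T) * (Hp + Hm)).trace := by
    have t1 : (((S + T) * (S - T)) * W).trace = ((S + T) * (Hp + Hm)).trace := by
      rw [Matrix.mul_assoc, hHW]
    have t2 : (((S - T) * (S + T)) * W).trace = ((S + T) * (Hp + Hm)).trace := by
      rw [Matrix.trace_mul_comm, ← Matrix.mul_assoc, hWH, Matrix.trace_mul_comm]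
    calc (Δ * W).trace + (Δ * W).trace = (Δ * W + Δ * W).trace := (Matrix.trace_add _ _).symm
      _ = (((S + T) * (S - T)) * W).trace + (((S - T) * (S + T)) * W).trace := by
          rw [hsum2, Matrix.trace_add]
      _ = _ := by rw [t1, t2]
  have hS' : S = T + Hp - Hm := by
    have e : S = T + (Hp - Hm) := by rw [← hdiff]; abel
    rw [e]; abel
  have c2 : ((S + T) * (Hp + Hm)).trace
      = ((S - T) * (S - T)).trace + ((T * Hp).trace + (T * Hp).trace)
        + ((S * Hm).trace + (S * Hm).trace) := by
    rw [hS']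
    simp only [Matrix.add_mul, Matrix.mul_add, Matrix.sub_mul, Matrix.mul_sub,
      Matrix.trace_add, Matrix.trace_sub, hpm, hmp, Matrix.trace_zero]
    ring
  have c3 : ((S - T) * (S - T)).trace = A.trace + B.trace - ((S * T).trace + (S * T).trace) := by
    have e : (S - T) * (S - T) = S * S - S * T - T * S + T * T := by noncomm_ring
    rw [e]
    simp only [Matrix.trace_add, Matrix.trace_sub]
    rw [hA.sqrt_mul_self, hB.sqrt_mul_self, Matrix.trace_mul_comm T S]
    ring
  have hmain : ((Δ * W).trace).re ≤ ∑ i, |(hA.1.sub hB.1).eigenvalues i| :=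
    trace_mul_unitary_le (hA.1.sub hB.1) hWmem
  have hTHp : 0 ≤ ((T * Hp).trace).re := psd_mul_trace_re_nonneg hT hHppsd
  have hSHm : 0 ≤ ((S * Hm).trace).re := psd_mul_trace_re_nonneg hS hHmpsd
  have ceq : (Δ * W).trace + (Δ * W).trace
      = (A.trace + B.trace - ((S * T).trace + (S * T).trace)
          + ((T * Hp).trace + (T * Hp).trace) + ((S * Hm).trace + (S * Hm).trace))
        + (A.trace + B.trace - ((S * T).trace + (S * T).trace)
          + ((T * Hp).trace + (T * Hp).trace) + ((S * Hm).trace + (S * Hm).trace)) := by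
    rw [c1, c2, c3]
  have creq := congrArg Complex.re ceq
  simp only [Complex.add_re, Complex.sub_re] at creq
  linarith [creq, hmain, hTHp, hSHm]

lemma msqrt_eq {d : ℕ} {A : Matrix (Fin d) (Fin d) ℂ} (h : A.PosSemidef) :
    msqrt A = h.sqrt := dif_pos h

/-- Trace-distance PCA error upper bounds fidelity PCA error: for a density matrix `ρ` with
sorted eigenvalues `α₁ ≥ ⋯ ≥ α_d` and a rank-`r` PSD matrix `σ` with `tr(σ) ≤ 1`,
`Σ_{i=1}^r αᵢ + tr(σ) − 2·F(ρ,σ) ≤ ‖ρ − σ‖₁ − Σ_{i=r+1}^d αᵢ`, where the trace norm of the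
Hermitian matrix `ρ − σ` is the sum of the absolute values of its eigenvalues. -/
theorem stmt17 (d r : ℕ) (ρ σ : Matrix (Fin d) (Fin d) ℂ)
    (hρ : ρ.PosSemidef) (htr : ρ.trace = 1)
    (hσ : σ.PosSemidef) (hrank : σ.rank ≤ r) (htrσ : (σ.trace).re ≤ 1)
    (α : Fin d → ℝ) (hα : α = descEigs hρ.1) :
    (∑ i ∈ Finset.univ.filter (fun i : Fin d => (i : ℕ) < r), α i)
        + (σ.trace).re - 2 * fid ρ σ
      ≤ (∑ i, |(hρ.1.sub hσ.1).eigenvalues i|)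
        - ∑ i ∈ Finset.univ.filter (fun i : Fin d => r ≤ (i : ℕ)), α i := by
  -- sum of sorted eigenvalues equals trace
  have hsumα : ∑ i, α i = (ρ.trace).re := by
    rw [hα, trace_re_eq_sum_eigs hρ.1]
    rw [← Equiv.sum_comp (Fin.revPerm.trans (Tuple.sort hρ.1.eigenvalues)) hρ.1.eigenvalues]
    apply Finset.sum_congr rfl
    intro i _
    simp [descEigs, Equiv.trans_apply]
  have htrρ : (ρ.trace).re = 1 := by rw [htr]; simp
  have hsplit : (∑ i ∈ Finset.univ.filter (fun i : Fin d => (i : ℕ) < r), α i)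
      + ∑ i ∈ Finset.univ.filter (fun i : Fin d => r ≤ (i : ℕ)), α i = ∑ i, α i := by
    have e : Finset.univ.filter (fun i : Fin d => ¬ ((i : ℕ) < r))
        = Finset.univ.filter (fun i : Fin d => r ≤ (i : ℕ)) :=
      Finset.filter_congr fun i _ => by simp [not_lt]
    rw [← e]
    exact Finset.sum_filter_add_sum_filter_not _ _ _
  -- fidelity bound
  set M := hρ.sqrt * hσ.sqrt with hMdef
  have hM : msqrt σ * ρ * msqrt σ = Mᴴ * M := by
    rw [hMdef, msqrt_eq hσ, Matrix.conjTranspose_mul, hσ.posSemidef_sqrt.1,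
      hρ.posSemidef_sqrt.1]
    have e2 : hσ.sqrt * hρ.sqrt * (hρ.sqrt * hσ.sqrt)
        = hσ.sqrt * (hρ.sqrt * hρ.sqrt) * hσ.sqrt := by noncomm_ring
    rw [e2, hρ.sqrt_mul_self]
  have hfid : fid ρ σ = (((Matrix.posSemidef_conjTranspose_mul_self M).sqrt).trace).re := by
    rw [fid, hM, msqrt_eq (Matrix.posSemidef_conjTranspose_mul_self M)]
  have hfid' : ((M.trace).re) ≤ fid ρ σ := by
    rw [hfid]; exact re_trace_le_trace_sqrt M
  have hps := powers_stormer hρ hσ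
  rw [← hMdef] at hps
  linarith [hps, hfid', hsumα, hsplit, htrρ]
end
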